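/- Soundness of solution-based pruning (SolutionCheck for MO-PAMO): let π be a path from a valid start state s_o to a state s = (v, p), let v_g ∉ V_so be the goal cell, and suppose c* ∈ ℕ × ℕ is the cost vector of some solution path (from s_o to a state with robot at v_g). If c* dominates g(π) + (d*(v), 0), then for every path σ from s to a state with robot cell v_g, c* dominates g(π·σ); hence no extension of π yields a cost vector in the Pareto-optimal front of the set of all solution-path cost vectors. -/

import Mathlib

/-- A cell in the occupancy grid. -/
abbrev Cell : Type := ℤ × ℤ

/-- Two cells are adjacent when their difference is a unit vector (L1-distance 1). -/
def Adjacent (a b : Cell) : Prop :=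
  (a.1 - b.1).natAbs + (a.2 - b.2).natAbs = 1

/-- A search state: the robot cell together with the cells of the `m` objects. -/
structure PState (m : ℕ) where
  robot : Cell
  objs : Fin m → Cell

/-- A state is valid: robot avoids static obstacles and objects, objects are
pairwise distinct and avoid static obstacles. -/
def Valid (Vso : Finset Cell) {m : ℕ} (s : PState m) : Prop :=
  s.robot ∉ Vso ∧ s.robot ∉ Set.range s.objs ∧
    Function.Injective s.objs ∧ ∀ k, s.objs k ∉ Vso

/-- A transition of the grid PAMO model, labelled by its cost vector:
a move costs `(1,0)`, a push costs `(1,1)`. -/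
inductive PTrans (Vso : Finset Cell) {m : ℕ} :
    PState m → PState m → ℕ × ℕ → Prop
  | move (v v' : Cell) (p : Fin m → Cell)
      (hadj : Adjacent v v') (hso : v' ∉ Vso) (hmo : v' ∉ Set.range p) :
      PTrans Vso ⟨v, p⟩ ⟨v', p⟩ (1, 0)
  | push (v v' : Cell) (p : Fin m → Cell) (k : Fin m)
      (hadj : Adjacent v v') (hk : v' = p k)
      (hso : v' + (v' - v) ∉ Vso) (hmo : v' + (v' - v) ∉ Set.range p) :
      PTrans Vso ⟨v, p⟩ ⟨v', Function.update p k (v' + (v' - v))⟩ (1, 1)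

/-- A path: a finite sequence of states where each consecutive pair is related
by a transition. -/
inductive PPath (Vso : Finset Cell) {m : ℕ} : PState m → PState m → Type
  | nil (s : PState m) : PPath Vso s s
  | cons {s s' t : PState m} {c : ℕ × ℕ}
      (h : PTrans Vso s s' c) (rest : PPath Vso s' t) : PPath Vso s t

/-- Cost vector of a path: the sum of its transition cost vectors. -/
def PPath.cost {Vso : Finset Cell} {m : ℕ} :
    {s t : PState m} → PPath Vso s t → ℕ × ℕ
  | _, _, .nil _ => (0, 0)
  | _, _, .cons (c := c) _ rest => c + rest.cost

/-- The list of states visited by a path, in order. -/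
def PPath.support {Vso : Finset Cell} {m : ℕ} :
    {s t : PState m} → PPath Vso s t → List (PState m)
  | s, _, .nil _ => [s]
  | s, _, .cons _ rest => s :: rest.support

/-- Concatenation of paths. -/
def PPath.append {Vso : Finset Cell} {m : ℕ} :
    {s t u : PState m} → PPath Vso s t → PPath Vso t u → PPath Vso s u
  | _, _, _, .nil _, σ => σ
  | _, _, _, .cons h rest, σ => .cons h (rest.append σ)

/-- `a` dominates `b` when `a ≤ b` componentwise and `a ≠ b`. -/
def Dominates {α : Type*} [Preorder α] (a b : α) : Prop := a ≤ b ∧ a ≠ b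

/-- The Pareto-optimal front of `B`: elements of `B` not dominated by any element of `B`. -/
def ParetoFront (B : Set (ℕ × ℕ)) : Set (ℕ × ℕ) :=
  {b ∈ B | ∀ a ∈ B, ¬ Dominates a b}

/-- The grid graph on cells avoiding the static obstacles. -/
def GridGraph (Vso : Finset Cell) : SimpleGraph {v : Cell // v ∉ Vso} where
  Adj a b := Adjacent a.1 b.1
  symm := by
    refine ⟨fun a b h => ?_⟩
    simp only [Adjacent] at h ⊢
    omega
  loopless := by
    refine ⟨fun a h => ?_⟩
    simp [Adjacent] at h

/-- `dstar Vso vg v`: graph distance (in `ℕ∞`) from `v` to `vg` in the grid graph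
avoiding static obstacles; `⊤` if unreachable (or undefined). -/
noncomputable def dstar (Vso : Finset Cell) (vg : Cell) (v : Cell) : ℕ∞ :=
  if h : v ∉ Vso ∧ vg ∉ Vso then (GridGraph Vso).edist ⟨v, h.1⟩ ⟨vg, h.2⟩ else ⊤

lemma Adjacent.ne {a b : Cell} (h : Adjacent a b) : a ≠ b := by
  intro he; subst he; simp [Adjacent] at h

lemma ptrans_valid {Vso : Finset Cell} {m : ℕ} {s s' : PState m} {c : ℕ × ℕ}
    (h : PTrans Vso s s' c) (hv : Valid Vso s) : Valid Vso s' := by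
  obtain ⟨h1, h2, h3, h4⟩ := hv
  cases h with
  | move v v' p hadj hso hmo => exact ⟨hso, hmo, h3, h4⟩
  | push v v' p k hadj hk hso hmo =>
    dsimp only at h1 h2 h3 h4 ⊢
    refine ⟨hk ▸ h4 k, ?_, ?_, ?_⟩
    · rintro ⟨j, hj⟩
      dsimp only at hj
      by_cases hjk : j = k
      · subst hjk
        rw [Function.update_self] at hj
        have h1 : v'.1 + (v'.1 - v.1) = v'.1 := congrArg Prod.fst hj
        have h2 : v'.2 + (v'.2 - v.2) = v'.2 := congrArg Prod.snd hj
        exact hadj.ne (Prod.ext (by omega) (by omega))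
      · rw [Function.update_of_ne hjk] at hj
        exact hjk (h3 (hj.trans hk))
    · intro a b hab
      dsimp only at hab
      by_cases ha : a = k <;> by_cases hb : b = k
      · rw [ha, hb]
      · subst ha
        rw [Function.update_self, Function.update_of_ne hb] at hab
        exact absurd ⟨b, hab.symm⟩ hmo
      · subst hb
        rw [Function.update_self, Function.update_of_ne ha] at hab
        exact absurd ⟨a, hab⟩ hmo
      · rw [Function.update_of_ne ha, Function.update_of_ne hb] at hab
        exact h3 hab
    · intro j
      dsimp only
      by_cases hjk : j = k
      · subst hjk; rw [Function.update_self]; exact hso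
      · rw [Function.update_of_ne hjk]; exact h4 j

lemma ppath_valid {Vso : Finset Cell} {m : ℕ} {s t : PState m}
    (σ : PPath Vso s t) (hv : Valid Vso s) : Valid Vso t := by
  induction σ with
  | nil => exact hv
  | cons h rest ih => exact ih (ptrans_valid h hv)

lemma ptrans_adj {Vso : Finset Cell} {m : ℕ} {s s' : PState m} {c : ℕ × ℕ}
    (h : PTrans Vso s s' c) : Adjacent s.robot s'.robot ∧ c.1 = 1 := by
  cases h with
  | move v v' p hadj hso hmo => exact ⟨hadj, rfl⟩
  | push v v' p k hadj hk hso hmo => exact ⟨hadj, rfl⟩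

lemma ppath_edist_le {Vso : Finset Cell} {m : ℕ} {s t : PState m}
    (σ : PPath Vso s t) (hv : Valid Vso s)
    (hs : s.robot ∉ Vso) (ht : t.robot ∉ Vso) :
    (GridGraph Vso).edist ⟨s.robot, hs⟩ ⟨t.robot, ht⟩ ≤ (σ.cost.1 : ℕ∞) := by
  induction σ with
  | nil => simp [SimpleGraph.edist_self]
  | @cons s s' t c h rest ih =>
    have hv' := ptrans_valid h hv
    have hs' : s'.robot ∉ Vso := hv'.1
    obtain ⟨hadj, hc⟩ := ptrans_adj h
    have h1 : (GridGraph Vso).edist ⟨s.robot, hs⟩ ⟨s'.robot, hs'⟩ ≤ 1 := by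
      have hw : (GridGraph Vso).Adj ⟨s.robot, hs⟩ ⟨s'.robot, hs'⟩ := hadj
      calc (GridGraph Vso).edist ⟨s.robot, hs⟩ ⟨s'.robot, hs'⟩
          ≤ (hw.toWalk.length : ℕ∞) := SimpleGraph.edist_le _
        _ = 1 := by simp
    calc (GridGraph Vso).edist ⟨s.robot, hs⟩ ⟨t.robot, ht⟩
        ≤ (GridGraph Vso).edist ⟨s.robot, hs⟩ ⟨s'.robot, hs'⟩ +
          (GridGraph Vso).edist ⟨s'.robot, hs'⟩ ⟨t.robot, ht⟩ :=
          SimpleGraph.edist_triangle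
      _ ≤ 1 + (rest.cost.1 : ℕ∞) := add_le_add h1 (ih hv' hs' ht)
      _ = (((PPath.cons h rest).cost).1 : ℕ∞) := by
          simp [PPath.cost, hc, Nat.cast_add]

lemma ppath_append_cost {Vso : Finset Cell} {m : ℕ} {s t u : PState m}
    (π : PPath Vso s t) (σ : PPath Vso t u) :
    (π.append σ).cost = π.cost + σ.cost := by
  induction π with
  | nil => simp [PPath.append, PPath.cost]
  | cons h rest ih => simp [PPath.append, PPath.cost, ih]; ring

/-- soundness of solution-based pruning (SolutionCheck for
MO-PAMO). If the cost vector `cstar` of some already-found solution path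
dominates `g(π) + (d*(v), 0)` (computed in `ℕ∞ × ℕ∞`), then `cstar` dominates
the cost of every solution extension of `π`, so no extension of `π` yields a
cost vector in the Pareto-optimal front of the set of all solution costs. -/
theorem solutionCheck_sound (Vso : Finset Cell) (m : ℕ)
    (so s : PState m) (hso : Valid Vso so) (vg : Cell) (hg : vg ∉ Vso)
    (π : PPath Vso so s) (cstar : ℕ × ℕ)
    (hsol : ∃ t : PState m, ∃ τ : PPath Vso so t, t.robot = vg ∧ τ.cost = cstar)
    (hdom : Dominates ((cstar.1 : ℕ∞), (cstar.2 : ℕ∞))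
      (((π.cost).1 : ℕ∞) + dstar Vso vg s.robot, ((π.cost).2 : ℕ∞))) :
    ∀ (t : PState m) (σ : PPath Vso s t), t.robot = vg →
      Dominates cstar (π.append σ).cost ∧
      (π.append σ).cost ∉ ParetoFront
        {c : ℕ × ℕ | ∃ t' : PState m, ∃ τ : PPath Vso so t',
          t'.robot = vg ∧ τ.cost = c} := by
  intro t σ ht
  subst ht
  have hvs : Valid Vso s := ppath_valid π hso
  have hs : s.robot ∉ Vso := hvs.1
  have hd : dstar Vso t.robot s.robot ≤ (σ.cost.1 : ℕ∞) := by
    rw [dstar, dif_pos ⟨hs, hg⟩]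
    exact ppath_edist_le σ hvs hs hg
  obtain ⟨hle, hne⟩ := hdom
  have hle1 : (cstar.1 : ℕ∞) ≤ (π.cost.1 : ℕ∞) + dstar Vso t.robot s.robot := hle.1
  have hle2 : (cstar.2 : ℕ∞) ≤ (π.cost.2 : ℕ∞) := hle.2
  have hstrict : (cstar.1 : ℕ∞) < (π.cost.1 : ℕ∞) + dstar Vso t.robot s.robot ∨
      (cstar.2 : ℕ∞) < (π.cost.2 : ℕ∞) := by
    by_contra hc
    push_neg at hc
    exact hne (Prod.ext (le_antisymm hle1 hc.1) (le_antisymm hle2 hc.2))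
  have hcost : (π.append σ).cost = π.cost + σ.cost := ppath_append_cost π σ
  have h1 : (cstar.1 : ℕ∞) ≤ ((π.cost.1 + σ.cost.1 : ℕ) : ℕ∞) := by
    push_cast
    exact hle1.trans (add_le_add_right hd _)
  have h2 : cstar.2 ≤ π.cost.2 + σ.cost.2 := by
    have : cstar.2 ≤ π.cost.2 := Nat.cast_le.mp hle2
    omega
  have hle' : cstar ≤ (π.append σ).cost := by
    rw [hcost]
    exact ⟨Nat.cast_le.mp h1, h2⟩
  have hne' : cstar ≠ (π.append σ).cost := by
    rcases hstrict with hst | hst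
    · have : (cstar.1 : ℕ∞) < ((π.cost.1 + σ.cost.1 : ℕ) : ℕ∞) := by
        push_cast
        exact lt_of_lt_of_le hst (add_le_add_right hd _)
      have hlt : cstar.1 < π.cost.1 + σ.cost.1 := Nat.cast_lt.mp this
      intro he
      rw [he, hcost] at hlt
      simp at hlt
    · have hlt : cstar.2 < π.cost.2 := Nat.cast_lt.mp hst
      intro he
      rw [he, hcost] at hlt
      simp only [Prod.snd_add] at hlt
      omega
  have hdom' : Dominates cstar (π.append σ).cost := ⟨hle', hne'⟩
  refine ⟨hdom', ?_⟩
  intro hpf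
  exact hpf.2 cstar hsol hdom'
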